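/- The convex hull of the set {Γ density operator : spec↓(Γ) = w} of density operators with fixed sorted spectrum w equals {Γ density operator : spec(Γ) ≺ w}, the set of density operators whose spectrum is majorized by w. -/

import Mathlib

open scoped ComplexOrder

/-- The vector `v` with entries sorted in decreasing order. -/
noncomputable def sortDesc {d : ℕ} (v : Fin d → ℝ) : Fin d → ℝ :=
  fun i => v (Tuple.sort (fun j => -v j) i)

/-- Sum of the `k` largest entries of `v`. -/
noncomputable def psum {d : ℕ} (v : Fin d → ℝ) (k : ℕ) : ℝ :=
  ∑ i ∈ Finset.univ.filter (fun i : Fin d => (i : ℕ) < k), sortDesc v i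

/-- `v ≺ w` : `v` is majorized by `w`. -/
def Majorizes {d : ℕ} (v w : Fin d → ℝ) : Prop :=
  (∀ k : ℕ, k ≤ d → psum v k ≤ psum w k) ∧ ∑ i, v i = ∑ i, w i

open Finset

variable {d : ℕ}

lemma sortDesc_antitone {d : ℕ} (v : Fin d → ℝ) : Antitone (sortDesc v) := by
  have h := Tuple.monotone_sort (fun j => -v j)
  intro i j hij
  have := h hij
  simp only [Function.comp_apply] at this
  unfold sortDesc
  linarith

lemma sortDesc_eq_self {d : ℕ} {w : Fin d → ℝ} (hw : Antitone w) : sortDesc w = w := by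
  have hm : Monotone (fun j => -w j) := fun i j hij => neg_le_neg (hw hij)
  have := Tuple.sort_eq_refl_iff_monotone.mpr hm
  funext i
  unfold sortDesc
  rw [this]
  rfl

lemma sortDesc_comp_perm {d : ℕ} (v : Fin d → ℝ) (σ : Equiv.Perm (Fin d)) :
    sortDesc (v ∘ σ) = sortDesc v := by
  have h := Tuple.comp_perm_comp_sort_eq_comp_sort (f := fun j => -v j) (σ := σ)
  funext i
  have := congr_fun h i
  simp only [Function.comp_apply] at this
  unfold sortDesc
  have hfun : (fun j => -(v ∘ σ) j) = (fun j => -v j) ∘ σ := rfl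
  rw [show (fun j => -(v ∘ ⇑σ) j) = (fun j => -v j) ∘ ⇑σ from rfl]
  simpa using this

lemma exists_perm_sortDesc {d : ℕ} (v : Fin d → ℝ) :
    ∃ σ : Equiv.Perm (Fin d), sortDesc v = v ∘ σ :=
  ⟨Tuple.sort (fun j => -v j), rfl⟩

lemma sum_sortDesc {d : ℕ} (v : Fin d → ℝ) : ∑ i, sortDesc v i = ∑ i, v i := by
  obtain ⟨σ, hσ⟩ := exists_perm_sortDesc v
  rw [hσ]
  exact Equiv.sum_comp σ v

lemma psum_top {d : ℕ} (v : Fin d → ℝ) {k : ℕ} (hk : d ≤ k) : psum v k = ∑ i, v i := by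
  rw [← sum_sortDesc v]
  unfold psum
  congr 1
  apply Finset.filter_true_of_mem
  intro i _
  exact lt_of_lt_of_le i.2 hk

variable {d : ℕ}

/-- extend a tuple to ℕ by zero -/
noncomputable def extz {d : ℕ} (f : Fin d → ℝ) : ℕ → ℝ :=
  fun j => if h : j < d then f ⟨j, h⟩ else 0

lemma sum_filter_lt_eq_sum_range (f : Fin d → ℝ) {k : ℕ} (hk : k ≤ d) :
    ∑ i ∈ univ.filter (fun i : Fin d => (i : ℕ) < k), f i = ∑ j ∈ range k, extz f j := by
  rw [sum_filter]
  have h1 : ∀ i : Fin d, (if (i : ℕ) < k then f i else 0)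
      = (fun j : ℕ => if j < k then extz f j else 0) i := by
    intro i
    by_cases h : (i : ℕ) < k <;> simp [h, extz, i.2, Fin.eta]
  rw [Fintype.sum_congr _ _ h1, Fin.sum_univ_eq_sum_range (fun j : ℕ => if j < k then extz f j else 0)]
  rw [← sum_filter]
  congr 1
  ext j
  simp only [mem_filter, mem_range]
  omega

lemma card_filter_lt {k : ℕ} (hk : k ≤ d) :
    (univ.filter (fun i : Fin d => (i : ℕ) < k)).card = k := by
  have := sum_filter_lt_eq_sum_range (fun _ : Fin d => (1 : ℝ)) hk
  simp only [sum_const, nsmul_eq_mul, mul_one] at this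
  have h2 : ∑ j ∈ range k, extz (fun _ : Fin d => (1:ℝ)) j = k := by
    rw [Finset.sum_congr rfl (fun j hj => ?_), Finset.sum_const, nsmul_eq_mul, mul_one,
      card_range]
    · simp only [extz]
      rw [dif_pos (lt_of_lt_of_le (mem_range.mp hj) hk)]
    
  exact_mod_cast this.trans h2

lemma psum_eq_sum_range (v : Fin d → ℝ) {k : ℕ} (hk : k ≤ d) :
    psum v k = ∑ j ∈ range k, extz (sortDesc v) j :=
  sum_filter_lt_eq_sum_range _ hk

lemma dot_le_psum (v e : Fin d → ℝ) {k : ℕ} (hk : k ≤ d)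
    (he0 : ∀ i, 0 ≤ e i) (he1 : ∀ i, e i ≤ 1) (hes : ∑ i, e i = k) :
    ∑ i, e i * v i ≤ psum v k := by
  obtain ⟨σ, hσ⟩ := exists_perm_sortDesc v
  set u := sortDesc v with hu
  have hua : Antitone u := sortDesc_antitone v
  -- replace by composed versions
  have hcomp : ∑ i, e i * v i = ∑ i, (e ∘ σ) i * u i := by
    rw [hσ]
    exact (Equiv.sum_comp σ (fun i => e i * v i)).symm
  set e' := e ∘ σ with he'
  have he'0 : ∀ i, 0 ≤ e' i := fun i => he0 _
  have he'1 : ∀ i, e' i ≤ 1 := fun i => he1 _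
  have he's : ∑ i, e' i = k := by
    have h := Equiv.sum_comp σ e
    simp only [he', Function.comp_apply]
    exact h.trans hes
  rw [hcomp]
  rcases eq_or_lt_of_le hk with hkd | hkd
  · -- k = d : all e' i = 1
    subst hkd
    have hall : ∀ i ∈ univ, e' i = 1 := by
      have hz : ∑ i : Fin k, (1 - e' i) = 0 := by
        rw [Finset.sum_sub_distrib, he's]
        simp
      intro i hi
      have := (Finset.sum_eq_zero_iff_of_nonneg
        (fun j _ => by linarith [he'1 j])).mp hz i hi
      linarith
    rw [psum_top v le_rfl, ← sum_sortDesc v, ← hu]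
    apply le_of_eq
    exact Finset.sum_congr rfl (fun i hi => by rw [hall i hi, one_mul])
  · -- k < d
    set t := u ⟨k, hkd⟩ with ht
    have hsplit := Finset.sum_filter_add_sum_filter_not univ
      (fun i : Fin d => (i : ℕ) < k) (fun i => e' i * u i)
    rw [← hsplit]
    have hB1 : ∑ i ∈ univ.filter (fun i : Fin d => ¬ (i : ℕ) < k), e' i * u i
        ≤ (∑ i ∈ univ.filter (fun i : Fin d => ¬ (i : ℕ) < k), e' i) * t := by
      rw [Finset.sum_mul]
      apply Finset.sum_le_sum
      intro i hi
      have hik : k ≤ (i : ℕ) := by simpa using (mem_filter.mp hi).2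
      have : u i ≤ t := hua (by exact_mod_cast hik : (⟨k, hkd⟩ : Fin d) ≤ i)
      exact mul_le_mul_of_nonneg_left this (he'0 i)
    have hsum2 : ∑ i ∈ univ.filter (fun i : Fin d => ¬ (i : ℕ) < k), e' i
        = k - ∑ i ∈ univ.filter (fun i : Fin d => (i : ℕ) < k), e' i := by
      have := Finset.sum_filter_add_sum_filter_not univ
        (fun i : Fin d => (i : ℕ) < k) e'
      rw [he's] at this
      linarith
    have hB2 : ∑ i ∈ univ.filter (fun i : Fin d => (i : ℕ) < k), e' i * u i
        + (k - ∑ i ∈ univ.filter (fun i : Fin d => (i : ℕ) < k), e' i) * t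
        ≤ psum v k := by
      have hcard : (univ.filter (fun i : Fin d => (i : ℕ) < k)).card = k :=
        card_filter_lt hk
      have hterm : ∀ i ∈ univ.filter (fun i : Fin d => (i : ℕ) < k),
          e' i * u i - e' i * t ≤ u i - t := by
        intro i hi
        have hik : (i : ℕ) < k := by simpa using (mem_filter.mp hi).2
        have hut : t ≤ u i := hua (by exact_mod_cast le_of_lt hik : i ≤ (⟨k, hkd⟩ : Fin d))
        have h1 := he'1 i
        have h0 := he'0 i
        nlinarith
      have hsum3 := Finset.sum_le_sum hterm
      rw [Finset.sum_sub_distrib, Finset.sum_sub_distrib] at hsum3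
      have hpsum : psum v k = ∑ i ∈ univ.filter (fun i : Fin d => (i : ℕ) < k), u i := rfl
      rw [hpsum]
      have hmul : (∑ i ∈ univ.filter (fun i : Fin d => (i : ℕ) < k), e' i * t)
          = (∑ i ∈ univ.filter (fun i : Fin d => (i : ℕ) < k), e' i) * t := by
        rw [Finset.sum_mul]
      have hconst : (∑ _i ∈ univ.filter (fun i : Fin d => (i : ℕ) < k), t) = k * t := by
        rw [Finset.sum_const, hcard, nsmul_eq_mul]
      rw [hmul, hconst] at hsum3
      nlinarith [hsum3]
    calc ∑ i ∈ univ.filter (fun i : Fin d => (i : ℕ) < k), e' i * u i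
          + ∑ i ∈ univ.filter (fun i : Fin d => ¬ (i : ℕ) < k), e' i * u i
        ≤ ∑ i ∈ univ.filter (fun i : Fin d => (i : ℕ) < k), e' i * u i
          + (∑ i ∈ univ.filter (fun i : Fin d => ¬ (i : ℕ) < k), e' i) * t := by linarith
      _ = ∑ i ∈ univ.filter (fun i : Fin d => (i : ℕ) < k), e' i * u i
          + (k - ∑ i ∈ univ.filter (fun i : Fin d => (i : ℕ) < k), e' i) * t := by
            rw [hsum2]
      _ ≤ psum v k := hB2

lemma monovary_of_antitone {d : ℕ} (f g : Fin d → ℝ) (hf : Antitone f) (hg : Antitone g) :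
    Monovary f g := by
  intro i j hg'
  rcases le_total j i with h | h
  · exact hf h
  · rcases eq_or_lt_of_le h with h' | h'
    · exact le_of_eq (congrArg f h')
    · exact absurd hg' (not_lt.mpr (hg (le_of_lt h')))

lemma abel_le {d : ℕ} (c lam w : Fin d → ℝ) (hc : Antitone c) (hl : Antitone lam)
    (hw : Antitone w)
    (hmaj : ∀ k : ℕ, k ≤ d → psum lam k ≤ psum w k) (hsum : ∑ i, lam i = ∑ i, w i) :
    ∑ i, c i * lam i ≤ ∑ i, c i * w i := by
  rcases Nat.eq_zero_or_pos d with hd | hd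
  · subst hd; simp
  set a := extz c with ha
  have hconv : ∀ (v : Fin d → ℝ), ∑ i, c i * v i = ∑ j ∈ range d, a j * extz v j := by
    intro v
    rw [← Fin.sum_univ_eq_sum_range (fun j => a j * extz v j) d]
    apply Finset.sum_congr rfl
    intro i _
    simp [ha, extz, i.2, Fin.eta]
  have hG : ∀ (v : Fin d → ℝ), Antitone v → ∀ k ∈ range (d+1),
      ∑ j ∈ range k, extz v j = psum v k := by
    intro v hv k hk
    rw [psum_eq_sum_range v (Nat.lt_succ_iff.mp (mem_range.mp hk)), sortDesc_eq_self hv]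
  have hparts : ∀ (v : Fin d → ℝ),
      ∑ j ∈ range d, a j * extz v j = a (d-1) * (∑ j ∈ range d, extz v j)
        - ∑ j ∈ range (d-1), (a (j+1) - a j) * (∑ i ∈ range (j+1), extz v i) := by
    intro v
    exact Finset.sum_range_by_parts a (extz v) d
  rw [hconv lam, hconv w, hparts lam, hparts w]
  have htot : (∑ j ∈ range d, extz lam j) = (∑ j ∈ range d, extz w j) := by
    rw [hG lam hl d (by simp), hG w hw d (by simp), psum_top lam le_rfl, psum_top w le_rfl]
    exact hsum
  rw [htot]
  apply sub_le_sub_left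
  apply Finset.sum_le_sum
  intro j hj
  have hj' : j + 1 ≤ d - 1 := mem_range.mp hj
  have hj2 : j + 1 < d := by omega
  have hstep : a (j+1) - a j ≤ 0 := by
    have : a (j+1) ≤ a j := by
      simp only [ha, extz]
      rw [dif_pos hj2, dif_pos (by omega : j < d)]
      exact hc (by exact_mod_cast Nat.le_succ j)
    linarith
  have hGle : (∑ i ∈ range (j+1), extz lam i) ≤ (∑ i ∈ range (j+1), extz w i) := by
    rw [hG lam hl (j+1) (by simp; omega), hG w hw (j+1) (by simp; omega)]
    exact hmaj (j+1) (by omega)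
  nlinarith [hstep, hGle]

theorem majorizes_mem_convexHull_orbit {d : ℕ} {lam w : Fin d → ℝ} (hw : Antitone w)
    (hmaj : Majorizes lam w) :
    lam ∈ convexHull ℝ (Set.range (fun σ : Equiv.Perm (Fin d) => w ∘ ⇑σ)) := by
  by_contra hnot
  have hfin : (Set.range (fun σ : Equiv.Perm (Fin d) => w ∘ ⇑σ)).Finite :=
    Set.finite_range _
  obtain ⟨f, u, hfu, hufl⟩ := geometric_hahn_banach_closed_point
    (convex_convexHull ℝ _) (hfin.isClosed_convexHull ℝ) hnot
  have hf_eq : ∀ x : Fin d → ℝ, f x = ∑ i, x i * f (Pi.single i 1) := by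
    intro x
    conv_lhs => rw [pi_eq_sum_univ x]
    rw [map_sum]
    apply Finset.sum_congr rfl
    intro i _
    rw [map_smul]
    have : (fun j => if i = j then (1:ℝ) else 0) = Pi.single i 1 := by
      funext j
      simp [Pi.single_apply, eq_comm]
    rw [this, smul_eq_mul]
  obtain ⟨π, hπ⟩ := exists_perm_sortDesc (fun i => f (Pi.single i 1))
  obtain ⟨ρ, hρ⟩ := exists_perm_sortDesc lam
  have hca : Antitone (sortDesc (fun i => f (Pi.single i 1))) := sortDesc_antitone _
  have hla : Antitone (sortDesc lam) := sortDesc_antitone lam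
  -- step a
  have hstepa : ∑ i, f (Pi.single i 1) * lam i
      ≤ ∑ i, sortDesc (fun i => f (Pi.single i 1)) i * sortDesc lam i := by
    have h1 : ∑ i, f (Pi.single i 1) * lam i
        = ∑ i, sortDesc (fun i => f (Pi.single i 1)) i * lam (π i) := by
      rw [← Equiv.sum_comp π (fun i => f (Pi.single i 1) * lam i)]
      exact Finset.sum_congr rfl (fun i _ => by rw [hπ]; rfl)
    rw [h1]
    calc ∑ i, sortDesc (fun i => f (Pi.single i 1)) i * lam (π i)
        = ∑ i, sortDesc (fun i => f (Pi.single i 1)) i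
            * sortDesc lam ((π.trans ρ.symm) i) := by
          refine Finset.sum_congr rfl (fun i _ => ?_)
          rw [hρ]
          simp
      _ ≤ ∑ i, sortDesc (fun i => f (Pi.single i 1)) i * sortDesc lam i :=
          (monovary_of_antitone _ _ hca hla).sum_mul_comp_perm_le_sum_mul
  -- step b
  have hstepb : ∑ i, sortDesc (fun i => f (Pi.single i 1)) i * sortDesc lam i
      ≤ ∑ i, sortDesc (fun i => f (Pi.single i 1)) i * w i := by
    apply abel_le _ _ _ hca hla hw
    · intro k hk
      have : psum (sortDesc lam) k = psum lam k := by
        rw [hρ]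
        unfold psum
        rw [sortDesc_comp_perm]
      rw [this]
      exact hmaj.1 k hk
    · rw [hρ]
      rw [show ∑ i, (lam ∘ ⇑ρ) i = ∑ i, lam (ρ i) from rfl, Equiv.sum_comp ρ lam]
      exact hmaj.2
  -- step c
  have hstepc : ∑ i, sortDesc (fun i => f (Pi.single i 1)) i * w i = f (w ∘ ⇑π.symm) := by
    rw [hf_eq]
    rw [← Equiv.sum_comp π (fun i => (w ∘ ⇑π.symm) i * f (Pi.single i 1))]
    refine Finset.sum_congr rfl (fun i _ => ?_)
    rw [hπ]
    simp [mul_comm]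
  have hmem : f (w ∘ ⇑π.symm) < u :=
    hfu _ (subset_convexHull ℝ _ ⟨π.symm, rfl⟩)
  have : f lam ≤ f (w ∘ ⇑π.symm) := by
    rw [hf_eq lam, ← hstepc]
    calc ∑ i, lam i * f (Pi.single i 1) = ∑ i, f (Pi.single i 1) * lam i :=
          Finset.sum_congr rfl (fun i _ => mul_comm _ _)
      _ ≤ _ := hstepa
      _ ≤ _ := hstepb
  linarith

lemma multiset_map_comp_perm {d : ℕ} {α : Type*} (u : Fin d → α) (σ : Equiv.Perm (Fin d)) :
    Finset.univ.val.map (u ∘ ⇑σ) = Finset.univ.val.map u := by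
  have h : Finset.univ.val.map (u ∘ ⇑σ) = (Finset.univ.val.map ⇑σ).map u := by
    rw [Multiset.map_map]
  rw [h, Multiset.map_univ_val_equiv]

lemma sortDesc_eq_of_multiset_eq {d : ℕ} {u v : Fin d → ℝ}
    (h : Finset.univ.val.map u = Finset.univ.val.map v) : sortDesc u = sortDesc v := by
  obtain ⟨σ, hσ⟩ := exists_perm_sortDesc u
  obtain ⟨τ, hτ⟩ := exists_perm_sortDesc v
  have hm : Finset.univ.val.map (sortDesc u) = Finset.univ.val.map (sortDesc v) := by
    rw [hσ, hτ, multiset_map_comp_perm, multiset_map_comp_perm, h]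
  rw [Fin.univ_val_map, Fin.univ_val_map] at hm
  have hperm : (List.ofFn (sortDesc u)).Perm (List.ofFn (sortDesc v)) :=
    Multiset.coe_eq_coe.mp hm
  have hs1 : (List.ofFn (sortDesc u)).Pairwise (· ≥ ·) := by
    rw [List.pairwise_ofFn]
    intro i j hij
    exact sortDesc_antitone u hij.le
  have hs2 : (List.ofFn (sortDesc v)).Pairwise (· ≥ ·) := by
    rw [List.pairwise_ofFn]
    intro i j hij
    exact sortDesc_antitone v hij.le
  exact List.ofFn_injective (List.Perm.eq_of_pairwise (fun a b _ _ h1 h2 => le_antisymm h2 h1) hs1 hs2 hperm)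

open Matrix in
lemma det_conj_unitary {d : ℕ} (U : Matrix.unitaryGroup (Fin d) ℂ)
    (M : Matrix (Fin d) (Fin d) ℂ) :
    ((U : Matrix (Fin d) (Fin d) ℂ) * M * star (U : Matrix (Fin d) (Fin d) ℂ)).det = M.det := by
  have h1 : (U : Matrix (Fin d) (Fin d) ℂ) * star (U : Matrix (Fin d) (Fin d) ℂ) = 1 :=
    Matrix.mem_unitaryGroup_iff.mp U.2
  rw [Matrix.det_mul, Matrix.det_mul]
  have h2 : (U : Matrix (Fin d) (Fin d) ℂ).det * (star (U : Matrix (Fin d) (Fin d) ℂ)).det = 1 := by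
    rw [← Matrix.det_mul, h1, Matrix.det_one]
  ring_nf
  ring_nf at h2
  calc (U : Matrix (Fin d) (Fin d) ℂ).det * M.det * (star (U : Matrix (Fin d) (Fin d) ℂ)).det
      = M.det * ((U : Matrix (Fin d) (Fin d) ℂ).det
          * (star (U : Matrix (Fin d) (Fin d) ℂ)).det) := by ring
    _ = M.det := by rw [h2, mul_one]

open Matrix in
lemma charfun_conj_diag {d : ℕ} (U : Matrix.unitaryGroup (Fin d) ℂ) (v : Fin d → ℝ) (x : ℂ) :
    (x • (1 : Matrix (Fin d) (Fin d) ℂ)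
      - (U : Matrix (Fin d) (Fin d) ℂ) * Matrix.diagonal (fun i => (v i : ℂ))
          * star (U : Matrix (Fin d) (Fin d) ℂ)).det
      = ∏ i, (x - (v i : ℂ)) := by
  have h1 : (U : Matrix (Fin d) (Fin d) ℂ) * star (U : Matrix (Fin d) (Fin d) ℂ) = 1 :=
    Matrix.mem_unitaryGroup_iff.mp U.2
  have hconj : x • (1 : Matrix (Fin d) (Fin d) ℂ)
      - (U : Matrix (Fin d) (Fin d) ℂ) * Matrix.diagonal (fun i => (v i : ℂ))
          * star (U : Matrix (Fin d) (Fin d) ℂ)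
      = (U : Matrix (Fin d) (Fin d) ℂ)
          * (x • (1 : Matrix (Fin d) (Fin d) ℂ) - Matrix.diagonal (fun i => (v i : ℂ)))
          * star (U : Matrix (Fin d) (Fin d) ℂ) := by
    rw [Matrix.mul_sub, Matrix.sub_mul]
    congr 1
    rw [Matrix.mul_smul, Matrix.mul_one, Matrix.smul_mul, h1]
  rw [hconj, det_conj_unitary]
  rw [Matrix.smul_one_eq_diagonal, Matrix.diagonal_sub, Matrix.det_diagonal]

open Matrix in
lemma eig_multiset_of_conj_diag {d : ℕ} {A : Matrix (Fin d) (Fin d) ℂ} (hA : A.IsHermitian)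
    (U : Matrix.unitaryGroup (Fin d) ℂ) (v : Fin d → ℝ)
    (hrep : A = (U : Matrix (Fin d) (Fin d) ℂ) * Matrix.diagonal (fun i => (v i : ℂ))
      * star (U : Matrix (Fin d) (Fin d) ℂ)) :
    Finset.univ.val.map hA.eigenvalues = Finset.univ.val.map v := by
  classical
  -- the two polynomials
  set P : Polynomial ℂ :=
    ((Finset.univ.val.map (fun i => (v i : ℂ))).map (fun a => Polynomial.X - Polynomial.C a)).prod
    with hP
  set Q : Polynomial ℂ :=
    ((Finset.univ.val.map (fun i => (hA.eigenvalues i : ℂ))).map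
      (fun a => Polynomial.X - Polynomial.C a)).prod with hQ
  have heval : ∀ (u : Fin d → ℝ) (x : ℂ),
      (((Finset.univ.val.map (fun i => (u i : ℂ))).map
        (fun a => Polynomial.X - Polynomial.C a)).prod).eval x = ∏ i, (x - (u i : ℂ)) := by
    intro u x
    rw [Multiset.map_map, Polynomial.eval_multiset_prod, Multiset.map_map]
    rw [Finset.prod_eq_multiset_prod]
    congr 1
    apply Multiset.map_congr rfl
    intro i _
    simp
  have hPQ : P = Q := by
    apply Polynomial.funext
    intro x
    rw [hP, hQ, heval, heval]
    rw [← charfun_conj_diag U v x, ← charfun_conj_diag hA.eigenvectorUnitary hA.eigenvalues x,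
      ← hrep]
    have hst := hA.spectral_theorem
    congr 2
  have hroots : Finset.univ.val.map (fun i => (v i : ℂ))
      = Finset.univ.val.map (fun i => (hA.eigenvalues i : ℂ)) := by
    have h1 := Polynomial.roots_multiset_prod_X_sub_C
      (Finset.univ.val.map (fun i => (v i : ℂ)))
    have h2 := Polynomial.roots_multiset_prod_X_sub_C
      (Finset.univ.val.map (fun i => (hA.eigenvalues i : ℂ)))
    rw [← h1, ← h2, ← hP, ← hQ, hPQ]
  have hinj : Function.Injective (fun r : ℝ => (r : ℂ)) := Complex.ofReal_injective
  apply Multiset.map_injective hinj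
  rw [Multiset.map_map, Multiset.map_map]
  exact hroots.symm

open Matrix in
lemma quad_sum_le_psum {d : ℕ} {A : Matrix (Fin d) (Fin d) ℂ} (hA : A.IsHermitian)
    (U : Matrix.unitaryGroup (Fin d) ℂ) (q : Fin d → ℝ)
    (hq0 : ∀ i, 0 ≤ q i) (hq1 : ∀ i, q i ≤ 1) {k : ℕ} (hk : k ≤ d)
    (hqs : ∑ i, q i = k) :
    ∑ i, q i * ((star (U : Matrix (Fin d) (Fin d) ℂ) * A * (U : Matrix (Fin d) (Fin d) ℂ)) i i).re
      ≤ psum hA.eigenvalues k := by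
  classical
  set V : Matrix (Fin d) (Fin d) ℂ := (hA.eigenvectorUnitary : Matrix (Fin d) (Fin d) ℂ) with hV
  set W : Matrix (Fin d) (Fin d) ℂ := star (U : Matrix (Fin d) (Fin d) ℂ) * V with hW
  have hVu : V * star V = 1 := Matrix.mem_unitaryGroup_iff.mp hA.eigenvectorUnitary.2
  have hVu' : star V * V = 1 := Matrix.mem_unitaryGroup_iff'.mp hA.eigenvectorUnitary.2
  have hUu : (U : Matrix (Fin d) (Fin d) ℂ) * star (U : Matrix (Fin d) (Fin d) ℂ) = 1 :=
    Matrix.mem_unitaryGroup_iff.mp U.2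
  have hUu' : star (U : Matrix (Fin d) (Fin d) ℂ) * (U : Matrix (Fin d) (Fin d) ℂ) = 1 :=
    Matrix.mem_unitaryGroup_iff'.mp U.2
  have hWW : star W * W = 1 := by
    rw [hW, StarMul.star_mul, star_star, mul_assoc, ← mul_assoc (U : Matrix (Fin d) (Fin d) ℂ), hUu,
      one_mul, hVu']
  have hWW' : W * star W = 1 := by
    rw [hW, StarMul.star_mul, star_star, mul_assoc, ← mul_assoc V, hVu, one_mul, hUu']
  have hconj : star (U : Matrix (Fin d) (Fin d) ℂ) * A * (U : Matrix (Fin d) (Fin d) ℂ)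
      = W * Matrix.diagonal (fun m => (hA.eigenvalues m : ℂ)) * star W := by
    conv_lhs => rw [hA.spectral_theorem]; simp only [Unitary.conjStarAlgAut_apply, Unitary.coe_star]
    rw [hW, StarMul.star_mul, star_star]
    have : Matrix.diagonal (RCLike.ofReal ∘ hA.eigenvalues)
        = Matrix.diagonal (fun m => (hA.eigenvalues m : ℂ)) := rfl
    rw [← hV, this]
    noncomm_ring
  have hentry : ∀ i, ((star (U : Matrix (Fin d) (Fin d) ℂ) * A
      * (U : Matrix (Fin d) (Fin d) ℂ)) i i).re
      = ∑ m, hA.eigenvalues m * Complex.normSq (W i m) := by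
    intro i
    rw [hconj]
    rw [Matrix.mul_apply]
    rw [Complex.re_sum]
    apply Finset.sum_congr rfl
    intro m _
    rw [Matrix.mul_diagonal, Matrix.star_eq_conjTranspose, Matrix.conjTranspose_apply]
    have : W i m * (hA.eigenvalues m : ℂ) * star (W i m)
        = (hA.eigenvalues m : ℂ) * (W i m * star (W i m)) := by ring
    rw [this, Complex.star_def, Complex.mul_conj, ← Complex.ofReal_mul, Complex.ofReal_re]
  -- the coefficients e
  set e : Fin d → ℝ := fun m => ∑ i, q i * Complex.normSq (W i m) with he
  have hrowsum : ∀ i, ∑ m, Complex.normSq (W i m) = 1 := by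
    intro i
    have h1 : (W * star W) i i = 1 := by rw [hWW']; simp
    rw [Matrix.mul_apply] at h1
    have : ∀ m, W i m * (star W) m i = (Complex.normSq (W i m) : ℂ) := by
      intro m
      rw [Matrix.star_eq_conjTranspose, Matrix.conjTranspose_apply, Complex.star_def,
        Complex.mul_conj]
    rw [Finset.sum_congr rfl (fun m _ => this m)] at h1
    exact_mod_cast h1
  have hcolsum : ∀ m, ∑ i, Complex.normSq (W i m) = 1 := by
    intro m
    have h1 : (star W * W) m m = 1 := by rw [hWW]; simp
    rw [Matrix.mul_apply] at h1
    have : ∀ i, (star W) m i * W i m = (Complex.normSq (W i m) : ℂ) := by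
      intro i
      rw [Matrix.star_eq_conjTranspose, Matrix.conjTranspose_apply, mul_comm,
        Complex.star_def, Complex.mul_conj]
    rw [Finset.sum_congr rfl (fun i _ => this i)] at h1
    exact_mod_cast h1
  have he0 : ∀ m, 0 ≤ e m := by
    intro m
    apply Finset.sum_nonneg
    intro i _
    exact mul_nonneg (hq0 i) (Complex.normSq_nonneg _)
  have he1 : ∀ m, e m ≤ 1 := by
    intro m
    calc e m ≤ ∑ i, Complex.normSq (W i m) := by
          apply Finset.sum_le_sum
          intro i _
          nlinarith [hq1 i, Complex.normSq_nonneg (W i m), hq0 i]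
      _ = 1 := hcolsum m
  have hes : ∑ m, e m = k := by
    rw [he]
    rw [Finset.sum_comm]
    calc ∑ i, ∑ m, q i * Complex.normSq (W i m)
        = ∑ i, q i * ∑ m, Complex.normSq (W i m) := by
          exact Finset.sum_congr rfl (fun i _ => (Finset.mul_sum _ _ _).symm)
      _ = ∑ i, q i := by
          exact Finset.sum_congr rfl (fun i _ => by rw [hrowsum i, mul_one])
      _ = k := hqs
  have hmain : ∑ i, q i * ((star (U : Matrix (Fin d) (Fin d) ℂ) * A
      * (U : Matrix (Fin d) (Fin d) ℂ)) i i).re = ∑ m, e m * hA.eigenvalues m := by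
    calc ∑ i, q i * ((star (U : Matrix (Fin d) (Fin d) ℂ) * A
          * (U : Matrix (Fin d) (Fin d) ℂ)) i i).re
        = ∑ i, ∑ m, q i * (hA.eigenvalues m * Complex.normSq (W i m)) := by
          refine Finset.sum_congr rfl (fun i _ => ?_)
          rw [hentry i, Finset.mul_sum]
      _ = ∑ m, ∑ i, q i * (hA.eigenvalues m * Complex.normSq (W i m)) := Finset.sum_comm
      _ = ∑ m, e m * hA.eigenvalues m := by
          refine Finset.sum_congr rfl (fun m _ => ?_)
          rw [he, Finset.sum_mul]
          exact Finset.sum_congr rfl (fun i _ => by ring)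
  rw [hmain]
  exact dot_le_psum hA.eigenvalues e hk he0 he1 hes

open Matrix in
lemma posSemidef_real_smul {d : ℕ} {M : Matrix (Fin d) (Fin d) ℂ} (hM : M.PosSemidef)
    {a : ℝ} (ha : 0 ≤ a) : ((a : ℝ) • M).PosSemidef := by
  constructor
  · unfold Matrix.IsHermitian
    rw [Matrix.conjTranspose_smul]
    rw [hM.1, star_trivial]
  · exact (hM.smul ha).2

open Matrix in
lemma trace_eq_sum_eigenvalues {d : ℕ} {A : Matrix (Fin d) (Fin d) ℂ} (hA : A.IsHermitian) :
    A.trace = ((∑ i, hA.eigenvalues i : ℝ) : ℂ) := by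
  conv_lhs => rw [hA.spectral_theorem]; simp only [Unitary.conjStarAlgAut_apply, Unitary.coe_star]
  rw [Matrix.trace_mul_cycle]
  rw [Matrix.mem_unitaryGroup_iff'.mp hA.eigenvectorUnitary.2, one_mul,
    Matrix.trace_diagonal]
  push_cast
  rfl

open Matrix in
lemma psum_eig_eq_qsum {d : ℕ} {G : Matrix (Fin d) (Fin d) ℂ} (hG : G.IsHermitian) {k : ℕ}
    (hk : k ≤ d) :
    ∃ q : Fin d → ℝ, (∀ i, 0 ≤ q i) ∧ (∀ i, q i ≤ 1) ∧ (∑ i, q i = k) ∧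
      psum hG.eigenvalues k = ∑ i, q i *
        ((star (hG.eigenvectorUnitary : Matrix (Fin d) (Fin d) ℂ) * G
          * (hG.eigenvectorUnitary : Matrix (Fin d) (Fin d) ℂ)) i i).re := by
  classical
  set σ : Equiv.Perm (Fin d) := Tuple.sort (fun j => -hG.eigenvalues j) with hσ
  refine ⟨fun i => if ((σ.symm i : Fin d) : ℕ) < k then 1 else 0, ?_, ?_, ?_, ?_⟩
  · intro i; dsimp only; split <;> norm_num
  · intro i; dsimp only; split <;> norm_num
  · rw [← Equiv.sum_comp σ (fun i => if ((σ.symm i : Fin d) : ℕ) < k then (1:ℝ) else 0)]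
    simp only [Equiv.symm_apply_apply]
    rw [Finset.sum_boole]
    rw [card_filter_lt hk]
  · have hdiag : ∀ i, ((star (hG.eigenvectorUnitary : Matrix (Fin d) (Fin d) ℂ) * G
        * (hG.eigenvectorUnitary : Matrix (Fin d) (Fin d) ℂ)) i i).re = hG.eigenvalues i := by
      intro i
      have h := hG.conjStarAlgAut_star_eigenvectorUnitary
      simp only [Unitary.conjStarAlgAut_apply, Unitary.coe_star, star_star] at h
      rw [h]
      simp
    rw [Finset.sum_congr rfl (fun i _ => by rw [hdiag i])]
    rw [← Equiv.sum_comp σ (fun i => (if ((σ.symm i : Fin d) : ℕ) < k then (1:ℝ) else 0)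
      * hG.eigenvalues i)]
    simp only [Equiv.symm_apply_apply]
    unfold psum sortDesc
    rw [Finset.sum_filter]
    apply Finset.sum_congr rfl
    intro i _
    by_cases h : (i : ℕ) < k <;> simp [h, hσ]

lemma psum_congr_sortDesc {d : ℕ} {u v : Fin d → ℝ} (h : sortDesc u = sortDesc v) (k : ℕ) :
    psum u k = psum v k := by
  unfold psum
  rw [h]

open Matrix in
lemma convex_majorized {D : ℕ} (w : Fin D → ℝ) :
    Convex ℝ {Γ : Matrix (Fin D) (Fin D) ℂ | ∃ hΓ : Γ.PosSemidef,
        Γ.trace = 1 ∧ Majorizes hΓ.1.eigenvalues w} := by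
  rintro x ⟨hx, hxtr, hxmaj⟩ y ⟨hy, hytr, hymaj⟩ a b ha hb hab
  have hGpsd : (a • x + b • y).PosSemidef :=
    (posSemidef_real_smul hx ha).add (posSemidef_real_smul hy hb)
  refine ⟨hGpsd, ?_, ?_, ?_⟩
  · rw [Matrix.trace_add, Matrix.trace_smul, Matrix.trace_smul, hxtr, hytr]
    simp only [Complex.real_smul, mul_one]
    exact_mod_cast congrArg (fun t : ℝ => (t : ℂ)) hab
  · -- partial sums
    intro k hk
    obtain ⟨q, hq0, hq1, hqs, hqe⟩ := psum_eig_eq_qsum hGpsd.1 hk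
    set U := hGpsd.1.eigenvectorUnitary with hU
    have hlin : star (U : Matrix (Fin D) (Fin D) ℂ) * (a • x + b • y)
        * (U : Matrix (Fin D) (Fin D) ℂ)
        = a • (star (U : Matrix (Fin D) (Fin D) ℂ) * x * (U : Matrix (Fin D) (Fin D) ℂ))
          + b • (star (U : Matrix (Fin D) (Fin D) ℂ) * y * (U : Matrix (Fin D) (Fin D) ℂ)) := by
      rw [Matrix.mul_add, Matrix.add_mul, Matrix.mul_smul, Matrix.smul_mul,
        Matrix.mul_smul, Matrix.smul_mul]
    have hent : ∀ i, ((star (U : Matrix (Fin D) (Fin D) ℂ) * (a • x + b • y)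
        * (U : Matrix (Fin D) (Fin D) ℂ)) i i).re
        = a * ((star (U : Matrix (Fin D) (Fin D) ℂ) * x
            * (U : Matrix (Fin D) (Fin D) ℂ)) i i).re
          + b * ((star (U : Matrix (Fin D) (Fin D) ℂ) * y
            * (U : Matrix (Fin D) (Fin D) ℂ)) i i).re := by
      intro i
      rw [hlin]
      simp [Matrix.add_apply, Matrix.smul_apply, Complex.real_smul]
    rw [hqe]
    calc ∑ i, q i * ((star (U : Matrix (Fin D) (Fin D) ℂ) * (a • x + b • y)
          * (U : Matrix (Fin D) (Fin D) ℂ)) i i).re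
        = a * (∑ i, q i * ((star (U : Matrix (Fin D) (Fin D) ℂ) * x
            * (U : Matrix (Fin D) (Fin D) ℂ)) i i).re)
          + b * (∑ i, q i * ((star (U : Matrix (Fin D) (Fin D) ℂ) * y
            * (U : Matrix (Fin D) (Fin D) ℂ)) i i).re) := by
          rw [Finset.mul_sum, Finset.mul_sum, ← Finset.sum_add_distrib]
          refine Finset.sum_congr rfl (fun i _ => ?_)
          rw [hent i]
          ring
      _ ≤ a * psum hx.1.eigenvalues k + b * psum hy.1.eigenvalues k := by
          have h1 := quad_sum_le_psum hx.1 U q hq0 hq1 hk hqs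
          have h2 := quad_sum_le_psum hy.1 U q hq0 hq1 hk hqs
          exact add_le_add (mul_le_mul_of_nonneg_left h1 ha)
            (mul_le_mul_of_nonneg_left h2 hb)
      _ ≤ a * psum w k + b * psum w k :=
          add_le_add (mul_le_mul_of_nonneg_left (hxmaj.1 k hk) ha)
            (mul_le_mul_of_nonneg_left (hymaj.1 k hk) hb)
      _ = psum w k := by rw [← add_mul, hab, one_mul]
  · -- total sums
    have h1 := trace_eq_sum_eigenvalues hGpsd.1
    have h2 := trace_eq_sum_eigenvalues hx.1
    have h3 := trace_eq_sum_eigenvalues hy.1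
    have htr : (a • x + b • y).trace = ((a * ∑ i, hx.1.eigenvalues i
        + b * ∑ i, hy.1.eigenvalues i : ℝ) : ℂ) := by
      rw [Matrix.trace_add, Matrix.trace_smul, Matrix.trace_smul, h2, h3]
      push_cast
      simp [Complex.real_smul]
    rw [h1] at htr
    have := Complex.ofReal_injective htr
    rw [this, hxmaj.2, hymaj.2, ← add_mul, hab, one_mul]

open Matrix in
/-- The convex hull of the set of density operators with fixed sorted spectrum `w`
equals the set of density operators whose spectrum is majorized by `w`. -/
theorem convexHull_fixed_spectrum_eq_majorized {D : ℕ}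
    (w : Fin D → ℝ) (hwmono : Antitone w) (hwpos : ∀ j, 0 ≤ w j)
    (hwsum : ∑ j, w j = 1) :
    convexHull ℝ {Γ : Matrix (Fin D) (Fin D) ℂ | ∃ hΓ : Γ.PosSemidef,
        Γ.trace = 1 ∧ sortDesc hΓ.1.eigenvalues = w} =
      {Γ : Matrix (Fin D) (Fin D) ℂ | ∃ hΓ : Γ.PosSemidef,
        Γ.trace = 1 ∧ Majorizes hΓ.1.eigenvalues w} := by
  apply Set.Subset.antisymm
  · -- ⊆
    apply convexHull_min
    · rintro Γ ⟨hΓ, htr, hsort⟩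
      refine ⟨hΓ, htr, ?_, ?_⟩
      · intro k _
        exact le_of_eq (psum_congr_sortDesc
          (by rw [hsort, sortDesc_eq_self hwmono]) k)
      · rw [← sum_sortDesc hΓ.1.eigenvalues, hsort]
    · exact convex_majorized w
  · -- ⊇
    rintro Γ ⟨hΓ, htr, hmaj⟩
    have hmem := majorizes_mem_convexHull_orbit hwmono hmaj
    rw [_root_.convexHull_eq] at hmem
    obtain ⟨ι, t, cw, z, h0, h1, hz, hcm⟩ := hmem
    rw [Finset.centerMass_eq_of_sum_1 _ _ h1] at hcm
    set U := hΓ.1.eigenvectorUnitary with hU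
    set A : ι → Matrix (Fin D) (Fin D) ℂ := fun i =>
      (U : Matrix (Fin D) (Fin D) ℂ) * Matrix.diagonal (fun j => ((z i j : ℝ) : ℂ))
        * star (U : Matrix (Fin D) (Fin D) ℂ) with hA
    -- Γ is the convex combination of the A i
    have hdiag : Matrix.diagonal (RCLike.ofReal ∘ hΓ.1.eigenvalues)
        = ∑ i ∈ t, cw i • Matrix.diagonal (fun j => ((z i j : ℝ) : ℂ)) := by
      ext j l
      rw [Matrix.sum_apply]
      by_cases hjl : j = l
      · subst hjl
        simp only [Matrix.diagonal_apply_eq, Matrix.smul_apply, Function.comp_apply]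
        have hval : hΓ.1.eigenvalues j = ∑ i ∈ t, cw i * z i j := by
          rw [← hcm]
          rw [Finset.sum_apply]
          exact Finset.sum_congr rfl (fun i _ => rfl)
        rw [show (RCLike.ofReal (hΓ.1.eigenvalues j) : ℂ) = ((hΓ.1.eigenvalues j : ℝ) : ℂ)
          from rfl, hval]
        push_cast
        exact Finset.sum_congr rfl (fun i _ => by rw [Complex.real_smul])
      · simp only [Matrix.diagonal_apply_ne _ hjl, Matrix.smul_apply, smul_zero,
          Finset.sum_const_zero]
    have hGsum : Γ = ∑ i ∈ t, cw i • A i := by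
      conv_lhs => rw [hΓ.1.spectral_theorem]; simp only [Unitary.conjStarAlgAut_apply, Unitary.coe_star]
      rw [← hU, hdiag, Matrix.mul_sum, Matrix.sum_mul]
      apply Finset.sum_congr rfl
      intro i _
      rw [hA]
      rw [Matrix.mul_smul, Matrix.smul_mul]
    -- each A i is in the generating set
    have hmemS : ∀ i ∈ t, A i ∈ {Γ : Matrix (Fin D) (Fin D) ℂ | ∃ hΓ : Γ.PosSemidef,
        Γ.trace = 1 ∧ sortDesc hΓ.1.eigenvalues = w} := by
      intro i hi
      obtain ⟨σi, hσi⟩ := hz i hi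
      have hzw : z i = w ∘ ⇑σi := hσi.symm
      have hdpsd : (Matrix.diagonal (fun j => ((z i j : ℝ) : ℂ))).PosSemidef := by
        rw [Matrix.posSemidef_diagonal_iff]
        intro j
        rw [hzw]
        exact_mod_cast Complex.zero_le_real.mpr (hwpos (σi j))
      have hpsd : (A i).PosSemidef := by
        rw [hA]
        have := hdpsd.mul_mul_conjTranspose_same (U : Matrix (Fin D) (Fin D) ℂ)
        rwa [← Matrix.star_eq_conjTranspose] at this
      refine ⟨hpsd, ?_, ?_⟩
      · rw [hA]
        dsimp only
        rw [Matrix.trace_mul_cycle, Matrix.mem_unitaryGroup_iff'.mp U.2, one_mul,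
          Matrix.trace_diagonal]
        rw [hzw]
        have hc : ∑ j, (((w ∘ ⇑σi) j : ℝ) : ℂ) = ((∑ j, (w ∘ ⇑σi) j : ℝ) : ℂ) := by
          push_cast; rfl
        rw [hc, show ∑ j, (w ∘ ⇑σi) j = ∑ j, w (σi j) from rfl, Equiv.sum_comp σi w, hwsum]
        norm_num
      · have hms := eig_multiset_of_conj_diag hpsd.1 U (z i) rfl
        have h5 := sortDesc_eq_of_multiset_eq hms
        rw [h5, hzw, sortDesc_comp_perm, sortDesc_eq_self hwmono]
    rw [hGsum, ← Finset.centerMass_eq_of_sum_1 _ _ h1]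
    exact Finset.centerMass_mem_convexHull t h0 (by rw [h1]; norm_num) hmemS
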